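/- Let f : [a,b] ⊆ (0,∞) → ℝ and g(x) = x^(1/p), p ≠ 0. Then f is symmetrized p-convex on [a,b] if and only if f ∘ g is symmetrized convex on the interval with endpoints a^p and b^p. -/

import Mathlib

noncomputable section
open Real Set MeasureTheory intervalIntegral

/-- `f` is p-convex on `[a,b]`. -/
def PConvexOn (p a b : ℝ) (f : ℝ → ℝ) : Prop :=
  ∀ x ∈ Set.Icc a b, ∀ y ∈ Set.Icc a b, ∀ t ∈ Set.Icc (0:ℝ) 1,
    f ((t * x ^ p + (1 - t) * y ^ p) ^ (1/p)) ≤ t * f x + (1 - t) * f y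

/-- The p-symmetrical transform of `f` on `[a,b]`. -/
def PSym (p a b : ℝ) (f : ℝ → ℝ) : ℝ → ℝ :=
  fun x => (f x + f ((a ^ p + b ^ p - x ^ p) ^ (1/p))) / 2

lemma aux_rpow_mem_uIcc {p a b x : ℝ} (ha : 0 < a) (hab : a < b)
    (hx : x ∈ Set.Icc a b) (hp : p ≠ 0) :
    x ^ p ∈ Set.uIcc (a ^ p) (b ^ p) := by
  rcases hp.lt_or_gt with hneg | hpos
  · exact Set.mem_uIcc.2 (Or.inr ⟨Real.rpow_le_rpow_of_nonpos (ha.trans_le hx.1) hx.2 hneg.le,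
      Real.rpow_le_rpow_of_nonpos ha hx.1 hneg.le⟩)
  · exact Set.mem_uIcc.2 (Or.inl ⟨Real.rpow_le_rpow ha.le hx.1 hpos.le,
      Real.rpow_le_rpow (ha.le.trans hx.1) hx.2 hpos.le⟩)

lemma aux_pos_of_mem {p a b u : ℝ} (ha : 0 < a) (hb : 0 < b)
    (hu : u ∈ Set.uIcc (a ^ p) (b ^ p)) : 0 < u := by
  rcases Set.mem_uIcc.1 hu with h | h
  · exact lt_of_lt_of_le (Real.rpow_pos_of_pos ha p) h.1
  · exact lt_of_lt_of_le (Real.rpow_pos_of_pos hb p) h.1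

lemma aux_rpow_inv_mem_Icc {p a b u : ℝ} (ha : 0 < a) (hab : a < b) (hp : p ≠ 0)
    (hu : u ∈ Set.uIcc (a ^ p) (b ^ p)) : u ^ (1/p) ∈ Set.Icc a b := by
  have hb : 0 < b := ha.trans hab
  have hupos : 0 < u := aux_pos_of_mem ha hb hu
  rcases hp.lt_or_gt with hneg | hpos
  · have hba : b ^ p ≤ a ^ p := Real.rpow_le_rpow_of_nonpos ha hab.le hneg.le
    have h : b ^ p ≤ u ∧ u ≤ a ^ p := by
      rcases Set.mem_uIcc.1 hu with h | h
      · exact ⟨hba.trans h.1, h.2.trans hba⟩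
      · exact h
    have h1p : 1/p < 0 := one_div_neg.2 hneg
    rw [one_div]
    constructor
    · have := Real.rpow_le_rpow_of_nonpos hupos h.2 h1p.le
      rwa [one_div, Real.rpow_rpow_inv ha.le hp] at this
    · have := Real.rpow_le_rpow_of_nonpos (Real.rpow_pos_of_pos hb p) h.1 h1p.le
      rwa [one_div, Real.rpow_rpow_inv hb.le hp] at this
  · have hba : a ^ p ≤ b ^ p := Real.rpow_le_rpow ha.le hab.le hpos.le
    have h : a ^ p ≤ u ∧ u ≤ b ^ p := by
      rcases Set.mem_uIcc.1 hu with h | h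
      · exact h
      · exact ⟨hba.trans h.1, h.2.trans hba⟩
    rw [one_div]
    constructor
    · have := Real.rpow_le_rpow (Real.rpow_pos_of_pos ha p).le h.1 (by positivity : (0:ℝ) ≤ 1/p)
      rwa [one_div, Real.rpow_rpow_inv ha.le hp] at this
    · have := Real.rpow_le_rpow hupos.le h.2 (by positivity : (0:ℝ) ≤ 1/p)
      rwa [one_div, Real.rpow_rpow_inv hb.le hp] at this

theorem symmetrized_pconvex_iff_symmetrized_convex (p a b : ℝ) (hp : p ≠ 0)
    (ha : 0 < a) (hab : a < b) (f : ℝ → ℝ) :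
    PConvexOn p a b (PSym p a b f) ↔
      ConvexOn ℝ (Set.uIcc (a ^ p) (b ^ p))
        (fun u => ((f ∘ fun z => z ^ (1/p)) u +
          (f ∘ fun z => z ^ (1/p)) (a ^ p + b ^ p - u)) / 2) := by
  have hb : 0 < b := ha.trans hab
  set F : ℝ → ℝ := fun u => ((f ∘ fun z => z ^ (1/p)) u +
      (f ∘ fun z => z ^ (1/p)) (a ^ p + b ^ p - u)) / 2 with hF
  -- key : for x ≥ 0, PSym p a b f x = F (x ^ p)
  have key : ∀ x : ℝ, 0 ≤ x → PSym p a b f x = F (x ^ p) := by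
    intro x hx
    simp only [hF, PSym, Function.comp_apply]
    rw [one_div, Real.rpow_rpow_inv hx hp]
  constructor
  · intro h
    constructor
    · exact convex_uIcc _ _
    · intro u hu v hv t s ht hs hts
      have hxu := aux_rpow_inv_mem_Icc ha hab hp hu
      have hxv := aux_rpow_inv_mem_Icc ha hab hp hv
      have hupos := aux_pos_of_mem ha hb hu
      have hvpos := aux_pos_of_mem ha hb hv
      have hup : (u ^ (1/p)) ^ p = u := by
        rw [one_div, Real.rpow_inv_rpow hupos.le hp]
      have hvp : (v ^ (1/p)) ^ p = v := by
        rw [one_div, Real.rpow_inv_rpow hvpos.le hp]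
      have := h _ hxu _ hxv t ⟨ht, by linarith⟩
      rw [hup, hvp] at this
      have hs' : s = 1 - t := by linarith
      rw [hs'] at *
      have hcomb : 0 ≤ t * u + (1 - t) * v := by
        have : 0 ≤ (1 - t) := by linarith
        positivity
      rw [key _ (Real.rpow_nonneg hcomb _), key _ (ha.le.trans hxu.1),
        key _ (ha.le.trans hxv.1), hup, hvp,
        (by rw [one_div, Real.rpow_inv_rpow hcomb hp] :
          ((t * u + (1 - t) * v) ^ (1/p)) ^ p = t * u + (1 - t) * v)] at this
      convert this using 2
      · rfl
      all_goals ring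
  · intro h x hx y hy t ht
    have hu := aux_rpow_mem_uIcc ha hab hx hp
    have hv := aux_rpow_mem_uIcc ha hab hy hp
    have h1t : 0 ≤ 1 - t := by linarith [ht.2]
    have hconv := h.2 hu hv ht.1 h1t (by ring)
    have hcomb : 0 ≤ t * x ^ p + (1 - t) * y ^ p := by
      have hxp : (0:ℝ) ≤ x ^ p := (Real.rpow_pos_of_pos (ha.trans_le hx.1) p).le
      have hyp : (0:ℝ) ≤ y ^ p := (Real.rpow_pos_of_pos (ha.trans_le hy.1) p).le
      have := mul_nonneg ht.1 hxp
      have := mul_nonneg h1t hyp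
      linarith
    rw [key _ (Real.rpow_nonneg hcomb _), key _ (ha.le.trans hx.1), key _ (ha.le.trans hy.1),
      (by rw [one_div, Real.rpow_inv_rpow hcomb hp] :
        ((t * x ^ p + (1 - t) * y ^ p) ^ (1/p)) ^ p = t * x ^ p + (1 - t) * y ^ p)]
    exact hconv
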